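/- arXiv:0909.3170 — 2 statements merged into one kernel-verified Lean document; each statement's English description precedes it below -/
import Mathlib

section
/- Let K be ℝ or ℂ, d ≥ 1, and fix a norm ‖·‖ on K^d. Let 𝒜 be an irreducible compact set of d×d matrices over K, let ‖·‖_𝒜 be any Barabanov norm for 𝒜, and let ℬ be any nonempty bounded set of d×d matrices over K. Then |ρ(𝒜) − ρ(ℬ)| ≤ ecc(‖·‖_𝒜, ‖·‖)·H(𝒜,ℬ). -/
open Filter Set

namespace JSRPaper

section Defs

variable {d : ℕ} {K : Type*} [RCLike K]

/-- `N` is a norm on `Fin d → K` (`K` is `ℝ` or `ℂ`). -/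
def IsNorm (N : (Fin d → K) → ℝ) : Prop :=
  (∀ x, 0 ≤ N x) ∧ (∀ x, N x = 0 ↔ x = 0) ∧
    (∀ (c : K) (x : Fin d → K), N (c • x) = ‖c‖ * N x) ∧
    (∀ x y, N (x + y) ≤ N x + N y)

/-- Operator norm of a matrix induced by the norm `N` on `Fin d → K`. -/
noncomputable def opNorm (N : (Fin d → K) → ℝ) (A : Matrix (Fin d) (Fin d) K) : ℝ :=
  sSup {r : ℝ | ∃ x : Fin d → K, N x = 1 ∧ r = N (A.mulVec x)}

/-- `‖𝒜‖ = sup_{A ∈ 𝒜} ‖A‖`. -/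
noncomputable def setNorm (N : (Fin d → K) → ℝ) (𝒜 : Set (Matrix (Fin d) (Fin d) K)) : ℝ :=
  sSup (opNorm N '' 𝒜)

/-- `𝒜^n`: the set of all products of `n` matrices from `𝒜`, with `𝒜^0 = {I}`. -/
def prodSet (𝒜 : Set (Matrix (Fin d) (Fin d) K)) : ℕ → Set (Matrix (Fin d) (Fin d) K)
  | 0 => {1}
  | n + 1 => {M | ∃ A ∈ 𝒜, ∃ P ∈ prodSet 𝒜 n, M = A * P}

/-- The joint spectral radius `ρ(𝒜) = limsup_{n → ∞} ‖𝒜^n‖^{1/n}`. -/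
noncomputable def jsr (N : (Fin d → K) → ℝ) (𝒜 : Set (Matrix (Fin d) (Fin d) K)) : ℝ :=
  Filter.limsup (fun n : ℕ => setNorm N (prodSet 𝒜 n) ^ ((n : ℝ)⁻¹)) Filter.atTop

/-- `𝒜` is irreducible: the matrices of `𝒜` have no common invariant subspace
other than `{0}` and `K^d`. -/
def IsIrred (𝒜 : Set (Matrix (Fin d) (Fin d) K)) : Prop :=
  ∀ W : Submodule K (Fin d → K), (∀ A ∈ 𝒜, ∀ x ∈ W, A.mulVec x ∈ W) → W = ⊥ ∨ W = ⊤

/-- `ℬ` is a bounded set of matrices (w.r.t. the operator norm induced by `N`). -/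
def IsBdd (N : (Fin d → K) → ℝ) (ℬ : Set (Matrix (Fin d) (Fin d) K)) : Prop :=
  ∃ C : ℝ, ∀ B ∈ ℬ, opNorm N B ≤ C

/-- The `p`-measure of irreducibility `χ_p(𝒜)`:
`inf_{‖x‖=1} sup { t : ball(0,t) ⊆ conv(𝒜_p(x) ∪ 𝒜_p(-x)) }`, where
`𝒜_p = ⋃_{k ≤ p} 𝒜^k`. -/
noncomputable def chi (N : (Fin d → K) → ℝ) (𝒜 : Set (Matrix (Fin d) (Fin d) K)) (p : ℕ) : ℝ :=
  sInf {s : ℝ | ∃ x : Fin d → K, N x = 1 ∧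
    s = sSup {t : ℝ | {y : Fin d → K | N y ≤ t} ⊆
      convexHull ℝ
        (((fun A : Matrix (Fin d) (Fin d) K => A.mulVec x) ''
            ⋃ k ∈ Finset.range (p + 1), prodSet 𝒜 k) ∪
          ((fun A : Matrix (Fin d) (Fin d) K => A.mulVec (-x)) ''
            ⋃ k ∈ Finset.range (p + 1), prodSet 𝒜 k))}}

/-- `ν_p(𝒜) = max{1, ‖𝒜‖^p} / χ_p(𝒜)`. -/
noncomputable def nu (N : (Fin d → K) → ℝ) (𝒜 : Set (Matrix (Fin d) (Fin d) K)) (p : ℕ) : ℝ :=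
  max 1 (setNorm N 𝒜 ^ p) / chi N 𝒜 p

/-- The Hausdorff distance between two matrix sets, w.r.t. the operator norm induced by `N`. -/
noncomputable def hdist (N : (Fin d → K) → ℝ) (𝒜 ℬ : Set (Matrix (Fin d) (Fin d) K)) : ℝ :=
  max (sSup ((fun A => sInf ((fun B => opNorm N (A - B)) '' ℬ)) '' 𝒜))
      (sSup ((fun B => sInf ((fun A => opNorm N (A - B)) '' 𝒜)) '' ℬ))

/-- `Nb` is a Barabanov norm for `𝒜`: it is a norm on `K^d` and
`ρ(𝒜)·‖x‖_b = max_{A ∈ 𝒜} ‖A x‖_b` for all `x` (`ρ(𝒜)` computed w.r.t. the reference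
norm `N`; its value does not depend on this choice). -/
def IsBarabanov (N Nb : (Fin d → K) → ℝ) (𝒜 : Set (Matrix (Fin d) (Fin d) K)) : Prop :=
  IsNorm Nb ∧ ∀ x : Fin d → K,
    jsr N 𝒜 * Nb x = sSup {r : ℝ | ∃ A ∈ 𝒜, r = Nb (A.mulVec x)}

/-- The eccentricity `ecc(N', N'') = (max_{x ≠ 0} N' x / N'' x) / (min_{x ≠ 0} N' x / N'' x)`. -/
noncomputable def eccen (N' N'' : (Fin d → K) → ℝ) : ℝ :=
  sSup {r : ℝ | ∃ x : Fin d → K, x ≠ 0 ∧ r = N' x / N'' x} /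
    sInf {r : ℝ | ∃ x : Fin d → K, x ≠ 0 ∧ r = N' x / N'' x}

end Defs

section Aux
variable {d : ℕ} {K : Type*} [RCLike K] {N M : (Fin d → K) → ℝ}

lemma aux_norm_zero (hN : IsNorm N) : N 0 = 0 := (hN.2.1 0).mpr rfl

lemma aux_norm_pos (hN : IsNorm N) {x : Fin d → K} (hx : x ≠ 0) : 0 < N x :=
  lt_of_le_of_ne (hN.1 x) (fun h => hx ((hN.2.1 x).mp h.symm))

lemma aux_norm_neg (hN : IsNorm N) (x : Fin d → K) : N (-x) = N x := by
  have : (-x) = (-1 : K) • x := by simp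
  rw [this, hN.2.2.1]; simp

lemma aux_norm_sum_le (hN : IsNorm N) {ι : Type*} (s : Finset ι) (f : ι → Fin d → K) :
    N (∑ i ∈ s, f i) ≤ ∑ i ∈ s, N (f i) := by
  classical
  induction s using Finset.cons_induction with
  | empty => simp [aux_norm_zero hN]
  | cons a s ha ih =>
    rw [Finset.sum_cons, Finset.sum_cons]
    exact le_trans (hN.2.2.2 _ _) (by linarith)

lemma aux_exists_ne_zero (hd : 1 ≤ d) : ∃ x : Fin d → K, x ≠ 0 := by
  refine ⟨Pi.single ⟨0, hd⟩ 1, fun h => ?_⟩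
  have := congrFun h ⟨0, hd⟩
  simp [Pi.single_apply] at this

lemma aux_exists_norm_one (hd : 1 ≤ d) (hN : IsNorm N) : ∃ x : Fin d → K, N x = 1 := by
  obtain ⟨y, hy⟩ := aux_exists_ne_zero (K := K) hd
  have hpos := aux_norm_pos hN hy
  refine ⟨((N y : ℝ) : K)⁻¹ • y, ?_⟩
  rw [hN.2.2.1, norm_inv, RCLike.norm_ofReal, abs_of_pos hpos, inv_mul_cancel₀ hpos.ne']

lemma aux_upper (hN : IsNorm N) : ∃ C : ℝ, 0 < C ∧ ∀ x, N x ≤ C * ‖x‖ := by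
  classical
  have hs : (0:ℝ) ≤ ∑ i : Fin d, N (Pi.single i 1) := Finset.sum_nonneg fun i _ => hN.1 _
  refine ⟨(∑ i : Fin d, N (Pi.single i 1)) + 1, by linarith, fun x => ?_⟩
  have hx : x = ∑ i : Fin d, Pi.single i (x i) := (Finset.univ_sum_single x).symm
  calc N x = N (∑ i : Fin d, Pi.single i (x i)) := by rw [← hx]
    _ ≤ ∑ i : Fin d, N (Pi.single i (x i)) := aux_norm_sum_le hN _ _
    _ ≤ ∑ i : Fin d, N (Pi.single i 1) * ‖x‖ := by
        refine Finset.sum_le_sum fun i _ => ?_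
        have h1 : (Pi.single i (x i) : Fin d → K) = x i • (Pi.single i (1 : K) : Fin d → K) := by
          rw [← Pi.single_smul]; simp
        rw [h1, hN.2.2.1, mul_comm]
        exact mul_le_mul_of_nonneg_left (norm_le_pi_norm x i) (hN.1 _)
    _ = (∑ i : Fin d, N (Pi.single i 1)) * ‖x‖ := by rw [Finset.sum_mul]
    _ ≤ ((∑ i : Fin d, N (Pi.single i 1)) + 1) * ‖x‖ := by
        have : (0:ℝ) ≤ ‖x‖ := norm_nonneg x
        nlinarith

lemma aux_continuous (hN : IsNorm N) : Continuous N := by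
  obtain ⟨C, hC, hCle⟩ := aux_upper hN
  have hlip : LipschitzWith (Real.toNNReal C) N := by
    refine LipschitzWith.of_dist_le_mul fun x y => ?_
    have h1 : N x ≤ N y + N (x - y) := by
      have := hN.2.2.2 y (x - y); simpa using this
    have h2 : N y ≤ N x + N (y - x) := by
      have := hN.2.2.2 x (y - x); simpa using this
    have h3 : N (y - x) = N (x - y) := by rw [← aux_norm_neg hN (x - y)]; simp
    have h4 : N (x - y) ≤ C * ‖x - y‖ := hCle _
    rw [Real.dist_eq, dist_eq_norm, Real.coe_toNNReal _ hC.le]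
    rw [abs_le]
    constructor <;> nlinarith
  exact hlip.continuous

lemma aux_lower (hd : 1 ≤ d) (hN : IsNorm N) : ∃ c : ℝ, 0 < c ∧ ∀ x, c * ‖x‖ ≤ N x := by
  have hne : (Metric.sphere (0 : Fin d → K) 1).Nonempty := by
    obtain ⟨y, hy⟩ := aux_exists_ne_zero (K := K) hd
    have hy' : ‖y‖ ≠ 0 := norm_ne_zero_iff.2 hy
    refine ⟨((‖y‖ : ℝ) : K)⁻¹ • y, ?_⟩
    simp only [Metric.mem_sphere, dist_zero_right, norm_smul, norm_inv, RCLike.norm_ofReal,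
      abs_norm]
    field_simp
  obtain ⟨z, hz, hmin⟩ := (isCompact_sphere (0 : Fin d → K) 1).exists_isMinOn hne
    (aux_continuous hN).continuousOn
  have hz1 : ‖z‖ = 1 := by simpa [dist_zero_right] using hz
  have hzne : z ≠ 0 := by intro h; rw [h] at hz1; simp at hz1
  refine ⟨N z, aux_norm_pos hN hzne, fun x => ?_⟩
  rcases eq_or_ne x 0 with rfl | hx
  · simp [aux_norm_zero hN]
  · have hxn : ‖x‖ ≠ 0 := norm_ne_zero_iff.2 hx
    set u := ((‖x‖ : ℝ) : K)⁻¹ • x with hu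
    have hu1 : u ∈ Metric.sphere (0 : Fin d → K) 1 := by
      simp only [hu, Metric.mem_sphere, dist_zero_right, norm_smul, norm_inv,
        RCLike.norm_ofReal, abs_norm]
      field_simp
    have hle : N z ≤ N u := hmin hu1
    have hNu : N u = ‖x‖⁻¹ * N x := by
      rw [hu, hN.2.2.1, norm_inv, RCLike.norm_ofReal, abs_norm]
    rw [hNu] at hle
    have hxpos : (0:ℝ) < ‖x‖ := lt_of_le_of_ne (norm_nonneg x) (Ne.symm hxn)
    calc N z * ‖x‖ ≤ (‖x‖⁻¹ * N x) * ‖x‖ := by nlinarith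
      _ = N x := by field_simp

lemma aux_compare (hd : 1 ≤ d) (hN : IsNorm N) (hM : IsNorm M) :
    ∃ C : ℝ, 0 < C ∧ ∀ x, N x ≤ C * M x := by
  obtain ⟨C, hC, h1⟩ := aux_upper hN
  obtain ⟨c, hc, h2⟩ := aux_lower hd hM
  refine ⟨C / c, by positivity, fun x => ?_⟩
  have := h1 x
  have := h2 x
  rw [div_mul_eq_mul_div, le_div_iff₀ hc]
  nlinarith [hN.1 x, hM.1 x, norm_nonneg x]


end Aux

section OpAux
variable {d : ℕ} {K : Type*} [RCLike K] {M : (Fin d → K) → ℝ}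

lemma aux_entry_bound (hd : 1 ≤ d) (hM : IsNorm M) :
    ∃ κ : ℝ, 0 < κ ∧ ∀ (A : Matrix (Fin d) (Fin d) K) (x : Fin d → K),
      M (A.mulVec x) ≤ (κ * ∑ i : Fin d, ∑ j : Fin d, ‖A i j‖) * M x := by
  obtain ⟨C, hC, hCle⟩ := aux_upper hM
  obtain ⟨c, hc, hcle⟩ := aux_lower hd hM
  refine ⟨C * c⁻¹, by positivity, fun A x => ?_⟩
  set S : ℝ := ∑ i : Fin d, ∑ j : Fin d, ‖A i j‖ with hS
  have hS0 : 0 ≤ S := Finset.sum_nonneg fun i _ => Finset.sum_nonneg fun j _ => norm_nonneg _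
  have hxle : ‖x‖ ≤ c⁻¹ * M x := by
    have := hcle x
    rw [← le_div_iff₀' hc] at this
    simpa [div_eq_inv_mul] using this
  have hmv : ‖A.mulVec x‖ ≤ S * ‖x‖ := by
    rw [pi_norm_le_iff_of_nonneg (by positivity)]
    intro i
    have hrow : (A.mulVec x) i = ∑ j : Fin d, A i j * x j := rfl
    calc ‖(A.mulVec x) i‖ = ‖∑ j : Fin d, A i j * x j‖ := by rw [hrow]
      _ ≤ ∑ j : Fin d, ‖A i j * x j‖ := norm_sum_le _ _
      _ ≤ ∑ j : Fin d, ‖A i j‖ * ‖x‖ := by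
          refine Finset.sum_le_sum fun j _ => ?_
          rw [norm_mul]
          exact mul_le_mul_of_nonneg_left (norm_le_pi_norm x j) (norm_nonneg _)
      _ = (∑ j : Fin d, ‖A i j‖) * ‖x‖ := by rw [Finset.sum_mul]
      _ ≤ S * ‖x‖ := by
          refine mul_le_mul_of_nonneg_right ?_ (norm_nonneg x)
          exact Finset.single_le_sum (f := fun i => ∑ j : Fin d, ‖A i j‖)
            (fun i _ => Finset.sum_nonneg fun j _ => norm_nonneg _) (Finset.mem_univ i)
  calc M (A.mulVec x) ≤ C * ‖A.mulVec x‖ := hCle _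
    _ ≤ C * (S * ‖x‖) := by nlinarith [norm_nonneg (A.mulVec x)]
    _ ≤ C * (S * (c⁻¹ * M x)) :=
        mul_le_mul_of_nonneg_left (mul_le_mul_of_nonneg_left hxle hS0) hC.le
    _ = (C * c⁻¹ * S) * M x := by ring

lemma aux_opSet_nonempty (hd : 1 ≤ d) (hM : IsNorm M) (A : Matrix (Fin d) (Fin d) K) :
    {r : ℝ | ∃ x : Fin d → K, M x = 1 ∧ r = M (A.mulVec x)}.Nonempty := by
  obtain ⟨x, hx⟩ := aux_exists_norm_one hd hM
  exact ⟨M (A.mulVec x), x, hx, rfl⟩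

lemma aux_bddAbove_opSet (hd : 1 ≤ d) (hM : IsNorm M) (A : Matrix (Fin d) (Fin d) K) :
    BddAbove {r : ℝ | ∃ x : Fin d → K, M x = 1 ∧ r = M (A.mulVec x)} := by
  obtain ⟨κ, hκ, hb⟩ := aux_entry_bound hd hM
  refine ⟨κ * ∑ i : Fin d, ∑ j : Fin d, ‖A i j‖, ?_⟩
  rintro r ⟨x, hx, rfl⟩
  have := hb A x
  rw [hx, mul_one] at this
  exact this

lemma aux_opNorm_nonneg (hd : 1 ≤ d) (hM : IsNorm M) (A : Matrix (Fin d) (Fin d) K) :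
    0 ≤ opNorm M A := by
  obtain ⟨x, hx⟩ := aux_exists_norm_one hd hM
  exact le_trans (hM.1 (A.mulVec x)) (le_csSup (aux_bddAbove_opSet hd hM A) ⟨x, hx, rfl⟩)

lemma aux_le_opNorm (hd : 1 ≤ d) (hM : IsNorm M) (A : Matrix (Fin d) (Fin d) K)
    (x : Fin d → K) : M (A.mulVec x) ≤ opNorm M A * M x := by
  rcases eq_or_ne x 0 with rfl | hx
  · simp [Matrix.mulVec_zero, aux_norm_zero hM]
  · have hpos := aux_norm_pos hM hx
    set u : Fin d → K := ((M x : ℝ) : K)⁻¹ • x with hu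
    have hu1 : M u = 1 := by
      rw [hu, hM.2.2.1, norm_inv, RCLike.norm_ofReal, abs_of_pos hpos,
        inv_mul_cancel₀ hpos.ne']
    have hAu : M (A.mulVec u) = (M x)⁻¹ * M (A.mulVec x) := by
      rw [hu, Matrix.mulVec_smul, hM.2.2.1, norm_inv, RCLike.norm_ofReal, abs_of_pos hpos]
    have hmem : M (A.mulVec u) ≤ opNorm M A :=
      le_csSup (aux_bddAbove_opSet hd hM A) ⟨u, hu1, rfl⟩
    rw [hAu] at hmem
    calc M (A.mulVec x) = ((M x)⁻¹ * M (A.mulVec x)) * M x := by field_simp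
      _ ≤ opNorm M A * M x := mul_le_mul_of_nonneg_right hmem hpos.le

lemma aux_opNorm_le (hd : 1 ≤ d) (hM : IsNorm M) {A : Matrix (Fin d) (Fin d) K} {t : ℝ}
    (h : ∀ x, M (A.mulVec x) ≤ t * M x) : opNorm M A ≤ t := by
  refine csSup_le (aux_opSet_nonempty hd hM A) ?_
  rintro r ⟨x, hx, rfl⟩
  have := h x
  rwa [hx, mul_one] at this

lemma aux_opNorm_one (hd : 1 ≤ d) (hM : IsNorm M) :
    opNorm M (1 : Matrix (Fin d) (Fin d) K) = 1 := by
  refine le_antisymm (aux_opNorm_le hd hM fun x => by rw [Matrix.one_mulVec, one_mul]) ?_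
  obtain ⟨x, hx⟩ := aux_exists_norm_one hd hM
  have : (1:ℝ) ≤ opNorm M 1 := by
    have := le_csSup (aux_bddAbove_opSet hd hM 1) (a := M ((1 : Matrix (Fin d) (Fin d) K).mulVec x)) ⟨x, hx, rfl⟩
    rwa [Matrix.one_mulVec, hx] at this
  exact this

lemma aux_opNorm_mul_le (hd : 1 ≤ d) (hM : IsNorm M) (A B : Matrix (Fin d) (Fin d) K) :
    opNorm M (A * B) ≤ opNorm M A * opNorm M B := by
  refine aux_opNorm_le hd hM fun x => ?_
  rw [← Matrix.mulVec_mulVec]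
  calc M (A.mulVec (B.mulVec x)) ≤ opNorm M A * M (B.mulVec x) := aux_le_opNorm hd hM A _
    _ ≤ opNorm M A * (opNorm M B * M x) :=
        mul_le_mul_of_nonneg_left (aux_le_opNorm hd hM B x) (aux_opNorm_nonneg hd hM A)
    _ = opNorm M A * opNorm M B * M x := by ring

lemma aux_opNorm_neg (hM : IsNorm M) (A : Matrix (Fin d) (Fin d) K) :
    opNorm M (-A) = opNorm M A := by
  unfold opNorm
  congr 1
  ext r
  constructor <;> rintro ⟨x, hx, rfl⟩ <;> refine ⟨x, hx, ?_⟩ <;>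
    rw [Matrix.neg_mulVec, aux_norm_neg hM]

lemma aux_opNorm_add_le (hd : 1 ≤ d) (hM : IsNorm M) (A B : Matrix (Fin d) (Fin d) K) :
    opNorm M (A + B) ≤ opNorm M A + opNorm M B := by
  refine aux_opNorm_le hd hM fun x => ?_
  rw [Matrix.add_mulVec]
  calc M (A.mulVec x + B.mulVec x) ≤ M (A.mulVec x) + M (B.mulVec x) := hM.2.2.2 _ _
    _ ≤ opNorm M A * M x + opNorm M B * M x :=
        add_le_add (aux_le_opNorm hd hM A x) (aux_le_opNorm hd hM B x)
    _ = (opNorm M A + opNorm M B) * M x := by ring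

lemma aux_opNorm_bdd_of_compact (hd : 1 ≤ d) (hM : IsNorm M)
    {𝒜 : Set (Matrix (Fin d) (Fin d) K)} (hcp : IsCompact 𝒜) :
    ∃ C : ℝ, 0 ≤ C ∧ ∀ A ∈ 𝒜, opNorm M A ≤ C := by
  rcases 𝒜.eq_empty_or_nonempty with rfl | hne
  · exact ⟨0, le_refl _, by simp⟩
  obtain ⟨κ, hκ, hb⟩ := aux_entry_bound hd hM
  set g : Matrix (Fin d) (Fin d) K → ℝ := fun A => ∑ i : Fin d, ∑ j : Fin d, ‖A i j‖ with hg
  have hgc : Continuous g := by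
    refine continuous_finset_sum _ fun i _ => continuous_finset_sum _ fun j _ => ?_
    exact (continuous_id.matrix_elem i j).norm
  have hbd : BddAbove (g '' 𝒜) := (hcp.image hgc).bddAbove
  set R : ℝ := sSup (g '' 𝒜) with hR
  have hgR : ∀ A ∈ 𝒜, g A ≤ R := fun A hA => le_csSup hbd (mem_image_of_mem g hA)
  have hR0 : 0 ≤ R := by
    obtain ⟨A₀, hA₀⟩ := hne
    refine le_trans ?_ (hgR A₀ hA₀)
    exact Finset.sum_nonneg fun i _ => Finset.sum_nonneg fun j _ => norm_nonneg _
  refine ⟨κ * R, by positivity, fun A hA => ?_⟩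
  refine aux_opNorm_le hd hM fun x => ?_
  calc M (A.mulVec x) ≤ (κ * g A) * M x := hb A x
    _ ≤ (κ * R) * M x :=
        mul_le_mul_of_nonneg_right (mul_le_mul_of_nonneg_left (hgR A hA) hκ.le) (hM.1 x)

end OpAux


section SetAux
variable {d : ℕ} {K : Type*} [RCLike K] {M : (Fin d → K) → ℝ}

lemma aux_setNorm_le {S : Set (Matrix (Fin d) (Fin d) K)} (hS : S.Nonempty) {t : ℝ}
    (h : ∀ A ∈ S, opNorm M A ≤ t) : setNorm M S ≤ t := by
  refine csSup_le (hS.image _) ?_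
  rintro r ⟨A, hA, rfl⟩
  exact h A hA

lemma aux_le_setNorm {S : Set (Matrix (Fin d) (Fin d) K)} {A : Matrix (Fin d) (Fin d) K}
    {t : ℝ} (hb : ∀ B ∈ S, opNorm M B ≤ t) (hA : A ∈ S) : opNorm M A ≤ setNorm M S := by
  refine le_csSup ⟨t, ?_⟩ (mem_image_of_mem _ hA)
  rintro r ⟨B, hB, rfl⟩
  exact hb B hB

lemma aux_prodSet_nonempty {S : Set (Matrix (Fin d) (Fin d) K)} (hS : S.Nonempty) (n : ℕ) :
    (prodSet S n).Nonempty := by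
  induction n with
  | zero => exact ⟨1, rfl⟩
  | succ n ih =>
    obtain ⟨B, hB⟩ := hS
    obtain ⟨P, hP⟩ := ih
    exact ⟨B * P, B, hB, P, hP, rfl⟩

lemma aux_prodSet_pointwise (hd : 1 ≤ d) (hM : IsNorm M)
    {S : Set (Matrix (Fin d) (Fin d) K)} {r : ℝ} (hr : 0 ≤ r)
    (h : ∀ B ∈ S, ∀ x, M (B.mulVec x) ≤ r * M x) :
    ∀ n, ∀ P ∈ prodSet S n, ∀ x, M (P.mulVec x) ≤ r ^ n * M x := by
  intro n
  induction n with
  | zero =>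
    rintro P rfl x
    rw [Matrix.one_mulVec, pow_zero, one_mul]
  | succ n ih =>
    rintro P ⟨B, hB, Q, hQ, rfl⟩ x
    rw [← Matrix.mulVec_mulVec]
    calc M (B.mulVec (Q.mulVec x)) ≤ r * M (Q.mulVec x) := h B hB _
      _ ≤ r * (r ^ n * M x) := mul_le_mul_of_nonneg_left (ih Q hQ x) hr
      _ = r ^ (n + 1) * M x := by ring

lemma aux_prodSet_opNorm_le (hd : 1 ≤ d) (hM : IsNorm M)
    {S : Set (Matrix (Fin d) (Fin d) K)} {C : ℝ} (hC : ∀ B ∈ S, opNorm M B ≤ C) (n : ℕ) :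
    ∀ P ∈ prodSet S n, opNorm M P ≤ (max C 1) ^ n := by
  induction n with
  | zero =>
    rintro P rfl
    rw [pow_zero, aux_opNorm_one hd hM]
  | succ n ih =>
    rintro P ⟨B, hB, Q, hQ, rfl⟩
    calc opNorm M (B * Q) ≤ opNorm M B * opNorm M Q := aux_opNorm_mul_le hd hM B Q
      _ ≤ (max C 1) * (max C 1) ^ n := by
          refine mul_le_mul (le_trans (hC B hB) (le_max_left _ _)) (ih Q hQ)
            (aux_opNorm_nonneg hd hM Q) ?_
          exact le_trans zero_le_one (le_max_right _ _)
      _ = (max C 1) ^ (n + 1) := by ring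

lemma aux_tendsto_rpow_inv {c : ℝ} (hc : 0 < c) :
    Tendsto (fun n : ℕ => c ^ ((n : ℝ)⁻¹)) atTop (nhds 1) := by
  have h1 : Tendsto (fun n : ℕ => (n : ℝ)⁻¹) atTop (nhds 0) :=
    tendsto_inv_atTop_zero.comp tendsto_natCast_atTop_atTop
  have h2 : Tendsto (fun n : ℕ => Real.log c * (n : ℝ)⁻¹) atTop (nhds 0) := by
    have := h1.const_mul (Real.log c)
    simpa using this
  have h3 : Tendsto (fun n : ℕ => Real.exp (Real.log c * (n : ℝ)⁻¹)) atTop (nhds 1) := by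
    have := (Real.continuous_exp.tendsto 0).comp h2
    simpa [Function.comp_def] using this
  refine h3.congr fun n => ?_
  rw [Real.rpow_def_of_pos hc]

lemma aux_rpow_pow {r : ℝ} (hr : 0 ≤ r) {n : ℕ} (hn : 1 ≤ n) :
    (r ^ n) ^ ((n : ℝ)⁻¹) = r := by
  rw [← Real.rpow_natCast r n, ← Real.rpow_mul hr,
    mul_inv_cancel₀ (Nat.cast_ne_zero.2 (by omega)), Real.rpow_one]

lemma aux_jsr_le (hd : 1 ≤ d) {S : Set (Matrix (Fin d) (Fin d) K)} {r c : ℝ}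
    {N : (Fin d → K) → ℝ} (hr : 0 ≤ r) (hc : 0 < c)
    (hnn : ∀ n, 0 ≤ setNorm N (prodSet S n))
    (h : ∀ n, setNorm N (prodSet S n) ≤ c * r ^ n) : jsr N S ≤ r := by
  set u : ℕ → ℝ := fun n => setNorm N (prodSet S n) ^ ((n : ℝ)⁻¹) with hu
  set v : ℕ → ℝ := fun n => c ^ ((n : ℝ)⁻¹) * r with hv
  have hEv : u ≤ᶠ[atTop] v := by
    rw [Filter.EventuallyLE, eventually_atTop]
    refine ⟨1, fun n hn => ?_⟩
    have h1 : u n ≤ (c * r ^ n) ^ ((n : ℝ)⁻¹) :=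
      Real.rpow_le_rpow (hnn n) (h n) (by positivity)
    have h2 : (c * r ^ n) ^ ((n : ℝ)⁻¹) = c ^ ((n : ℝ)⁻¹) * r := by
      rw [Real.mul_rpow hc.le (pow_nonneg hr n), aux_rpow_pow hr hn]
    exact h1.trans_eq h2
  have hvt : Tendsto v atTop (nhds r) := by
    have := (aux_tendsto_rpow_inv hc).mul_const r
    simpa using this
  have : limsup u atTop ≤ limsup v atTop := by
    refine limsup_le_limsup hEv ?_ ?_
    · have hb : IsBoundedUnder (· ≥ ·) atTop u :=
        isBoundedUnder_of ⟨0, fun n => Real.rpow_nonneg (hnn n) _⟩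
      exact hb.isCoboundedUnder_le
    · exact hvt.isBoundedUnder_le
  rwa [hvt.limsup_eq] at this

lemma aux_le_jsr (hd : 1 ≤ d) {S : Set (Matrix (Fin d) (Fin d) K)} {r c Cb : ℝ}
    {N : (Fin d → K) → ℝ} (hr : 0 ≤ r) (hc : 0 < c) (hCb : 1 ≤ Cb)
    (hnn : ∀ n, 0 ≤ setNorm N (prodSet S n))
    (hub : ∀ n, setNorm N (prodSet S n) ≤ Cb ^ n)
    (h : ∀ n, c * r ^ n ≤ setNorm N (prodSet S n)) : r ≤ jsr N S := by
  set u : ℕ → ℝ := fun n => setNorm N (prodSet S n) ^ ((n : ℝ)⁻¹) with hu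
  set v : ℕ → ℝ := fun n => c ^ ((n : ℝ)⁻¹) * r with hv
  have hEv : v ≤ᶠ[atTop] u := by
    rw [Filter.EventuallyLE, eventually_atTop]
    refine ⟨1, fun n hn => ?_⟩
    have h1 : (c * r ^ n) ^ ((n : ℝ)⁻¹) ≤ u n :=
      Real.rpow_le_rpow (by positivity) (h n) (by positivity)
    have h2 : (c * r ^ n) ^ ((n : ℝ)⁻¹) = c ^ ((n : ℝ)⁻¹) * r := by
      rw [Real.mul_rpow hc.le (pow_nonneg hr n), aux_rpow_pow hr hn]
    exact h2.symm.trans_le h1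
  have hvt : Tendsto v atTop (nhds r) := by
    have := (aux_tendsto_rpow_inv hc).mul_const r
    simpa using this
  have hbu : IsBoundedUnder (· ≤ ·) atTop u := by
    refine isBoundedUnder_of ⟨max Cb 1, fun n => ?_⟩
    rcases Nat.eq_zero_or_pos n with rfl | hn
    · simp [hu, Real.rpow_zero]
    · have h1 : u n ≤ (Cb ^ n) ^ ((n : ℝ)⁻¹) :=
        Real.rpow_le_rpow (hnn n) (hub n) (by positivity)
      rw [aux_rpow_pow (by linarith) hn] at h1
      exact h1.trans (le_max_left _ _)
  have : limsup v atTop ≤ limsup u atTop :=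
    limsup_le_limsup hEv hvt.isCoboundedUnder_le hbu
  rwa [hvt.limsup_eq] at this

lemma aux_prodSet_sup_lower (hd : 1 ≤ d) (hM : IsNorm M)
    {S : Set (Matrix (Fin d) (Fin d) K)} (hSne : S.Nonempty) {r CS : ℝ} (hr : 0 ≤ r)
    (hbd : ∀ B ∈ S, ∀ x, M (B.mulVec x) ≤ CS * M x)
    (h : ∀ x, r * M x ≤ sSup {t : ℝ | ∃ B ∈ S, t = M (B.mulVec x)}) :
    ∀ n (x : Fin d → K), r ^ n * M x ≤ sSup {t : ℝ | ∃ P ∈ prodSet S n, t = M (P.mulVec x)} := by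
  have hCS0 : ∀ B ∈ S, ∀ x, M (B.mulVec x) ≤ max CS 0 * M x := fun B hB x =>
    le_trans (hbd B hB x) (mul_le_mul_of_nonneg_right (le_max_left _ _) (hM.1 x))
  have hPbd := aux_prodSet_pointwise hd hM (le_max_right CS 0) hCS0
  have hbdd : ∀ n x, BddAbove {t : ℝ | ∃ P ∈ prodSet S n, t = M (P.mulVec x)} := by
    intro n x
    refine ⟨(max CS 0) ^ n * M x, ?_⟩
    rintro t ⟨P, hP, rfl⟩
    exact hPbd n P hP x
  have hne : ∀ n x, {t : ℝ | ∃ P ∈ prodSet S n, t = M (P.mulVec x)}.Nonempty := by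
    intro n x
    obtain ⟨P, hP⟩ := aux_prodSet_nonempty hSne n
    exact ⟨M (P.mulVec x), P, hP, rfl⟩
  have hsup0 : ∀ n x, (0:ℝ) ≤ sSup {t : ℝ | ∃ P ∈ prodSet S n, t = M (P.mulVec x)} := by
    intro n x
    obtain ⟨P, hP⟩ := aux_prodSet_nonempty hSne n
    exact le_trans (hM.1 _) (le_csSup (hbdd n x) ⟨P, hP, rfl⟩)
  intro n
  induction n with
  | zero =>
    intro x
    have hset : {t : ℝ | ∃ P ∈ prodSet S 0, t = M (P.mulVec x)} = {M x} := by
      ext t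
      constructor
      · rintro ⟨P, rfl, rfl⟩; simp [Matrix.one_mulVec]
      · rintro rfl; exact ⟨1, rfl, by rw [Matrix.one_mulVec]⟩
    rw [hset, csSup_singleton, pow_zero, one_mul]
  | succ n ih =>
    intro x
    rcases eq_or_lt_of_le hr with hr0 | hrpos
    · rw [← hr0, zero_pow (Nat.succ_ne_zero n), zero_mul]
      exact hsup0 _ x
    refine le_of_forall_pos_le_add fun η hη => ?_
    obtain ⟨B₀, hB₀⟩ := hSne
    obtain ⟨t₁, ⟨P, hP, rfl⟩, hP1⟩ :=
      exists_lt_of_lt_csSup (hne n x)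
        (show r ^ n * M x - η / (2 * r) < sSup {t : ℝ | ∃ P ∈ prodSet S n, t = M (P.mulVec x)}
          from lt_of_lt_of_le (sub_lt_self _ (by positivity)) (ih x))
    obtain ⟨t₂, ⟨B, hB, rfl⟩, hB1⟩ :=
      exists_lt_of_lt_csSup
        (show {t : ℝ | ∃ B ∈ S, t = M (B.mulVec (P.mulVec x))}.Nonempty from
          ⟨M (B₀.mulVec (P.mulVec x)), B₀, hB₀, rfl⟩)
        (show r * M (P.mulVec x) - η / 2 < sSup {t : ℝ | ∃ B ∈ S, t = M (B.mulVec (P.mulVec x))}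
          from lt_of_lt_of_le (sub_lt_self _ (by linarith)) (h (P.mulVec x)))
    have hmem : M ((B * P).mulVec x) ≤
        sSup {t : ℝ | ∃ Q ∈ prodSet S (n+1), t = M (Q.mulVec x)} :=
      le_csSup (hbdd (n+1) x) ⟨B * P, ⟨B, hB, P, hP, rfl⟩, rfl⟩
    have heq : M ((B * P).mulVec x) = M (B.mulVec (P.mulVec x)) := by
      rw [← Matrix.mulVec_mulVec]
    have hstep : r * (r ^ n * M x - η / (2 * r)) < r * M (P.mulVec x) :=
      mul_lt_mul_of_pos_left hP1 hrpos
    have hcalc : r * (r ^ n * M x - η / (2 * r)) = r ^ (n+1) * M x - η / 2 := by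
      field_simp; ring
    linarith [hB1, hstep, hcalc, heq ▸ hmem]

end SetAux

set_option maxHeartbeats 2000000 in
/-- the eccentricity of a Barabanov norm of `𝒜` w.r.t. the fixed norm serves
as a Lipschitz constant: `|ρ(𝒜) − ρ(ℬ)| ≤ ecc(‖·‖_𝒜, ‖·‖) · H(𝒜, ℬ)`. -/
theorem lipschitz_jsr_ecc {d : ℕ} (hd : 1 ≤ d) {K : Type*} [RCLike K]
    (N : (Fin d → K) → ℝ) (hN : IsNorm N)
    (𝒜 : Set (Matrix (Fin d) (Fin d) K))
    (h𝒜ne : 𝒜.Nonempty) (h𝒜cp : IsCompact 𝒜) (h𝒜ir : IsIrred 𝒜)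
    (Nb : (Fin d → K) → ℝ) (hNb : IsBarabanov N Nb 𝒜)
    (ℬ : Set (Matrix (Fin d) (Fin d) K)) (hℬne : ℬ.Nonempty) (hℬbd : IsBdd N ℬ) :
    |jsr N 𝒜 - jsr N ℬ| ≤ eccen Nb N * hdist N 𝒜 ℬ := by
  classical
  obtain ⟨hNbn, hBar⟩ := hNb
  obtain ⟨A₀, hA₀⟩ := h𝒜ne
  obtain ⟨B₀, hB₀⟩ := hℬne
  set ρ := jsr N 𝒜 with hρdef
  set hdst := hdist N 𝒜 ℬ with hhdst
  -- eccentricity quantities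
  obtain ⟨e₁, he₁, h1⟩ := aux_compare hd hNbn hN
  obtain ⟨e₂, he₂, h2⟩ := aux_compare hd hN hNbn
  obtain ⟨x₀, hx₀⟩ := aux_exists_norm_one hd hN
  have hx₀ne : x₀ ≠ 0 := by
    intro hc; rw [hc, aux_norm_zero hN] at hx₀; norm_num at hx₀
  set Srat : Set ℝ := {r : ℝ | ∃ x : Fin d → K, x ≠ 0 ∧ r = Nb x / N x} with hSrat
  have hSne : Srat.Nonempty := ⟨Nb x₀ / N x₀, x₀, hx₀ne, rfl⟩
  have hSub : ∀ r ∈ Srat, r ≤ e₁ := by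
    rintro r ⟨x, hx, rfl⟩
    rw [div_le_iff₀ (aux_norm_pos hN hx)]
    linarith [h1 x]
  have hSlb : ∀ r ∈ Srat, e₂⁻¹ ≤ r := by
    rintro r ⟨x, hx, rfl⟩
    rw [le_div_iff₀ (aux_norm_pos hN hx), inv_mul_eq_div, div_le_iff₀ he₂]
    linarith [h2 x]
  set ep := sSup Srat with hepdef
  set em := sInf Srat with hemdef
  have hbddA : BddAbove Srat := ⟨e₁, hSub⟩
  have hbddB : BddBelow Srat := ⟨e₂⁻¹, hSlb⟩
  have hem_pos : 0 < em := lt_of_lt_of_le (inv_pos.2 he₂) (le_csInf hSne hSlb)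
  have hem_le_ep : em ≤ ep := csInf_le_csSup hSne hbddB hbddA
  have hep_pos : 0 < ep := lt_of_lt_of_le hem_pos hem_le_ep
  have hub : ∀ x, Nb x ≤ ep * N x := by
    intro x
    rcases eq_or_ne x 0 with rfl | hx
    · rw [aux_norm_zero hNbn, aux_norm_zero hN, mul_zero]
    · have hmem : Nb x / N x ≤ ep := le_csSup hbddA ⟨x, hx, rfl⟩
      rw [div_le_iff₀ (aux_norm_pos hN hx)] at hmem
      linarith
  have hlb : ∀ x, em * N x ≤ Nb x := by
    intro x
    rcases eq_or_ne x 0 with rfl | hx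
    · rw [aux_norm_zero hNbn, aux_norm_zero hN, mul_zero]
    · have hmem : em ≤ Nb x / N x := csInf_le hbddB ⟨x, hx, rfl⟩
      rw [le_div_iff₀ (aux_norm_pos hN hx)] at hmem
      linarith
  set ε := ep / em with hεdef
  have hε1 : (1:ℝ) ≤ ε := (one_le_div hem_pos).2 hem_le_ep
  have hεpos : (0:ℝ) < ε := lt_of_lt_of_le one_pos hε1
  have hecc : eccen Nb N = ε := rfl
  -- bounds for operator norms
  obtain ⟨CA, hCA0, hCA⟩ := aux_opNorm_bdd_of_compact hd hN h𝒜cp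
  obtain ⟨CB', hCB'⟩ := hℬbd
  set CB := max CB' 0 with hCBdef
  have hCB : ∀ B ∈ ℬ, opNorm N B ≤ CB := fun B hB => (hCB' B hB).trans (le_max_left _ _)
  have hCB0 : (0:ℝ) ≤ CB := le_max_right _ _
  -- Hausdorff distance facts
  have hdiff : ∀ A ∈ 𝒜, ∀ B ∈ ℬ, opNorm N (A - B) ≤ CA + CB := by
    intro A hA B hB
    rw [sub_eq_add_neg]
    calc opNorm N (A + -B) ≤ opNorm N A + opNorm N (-B) := aux_opNorm_add_le hd hN A (-B)
      _ = opNorm N A + opNorm N B := by rw [aux_opNorm_neg hN]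
      _ ≤ CA + CB := add_le_add (hCA A hA) (hCB B hB)
  have hd2 : ∀ B ∈ ℬ, sInf ((fun A => opNorm N (A - B)) '' 𝒜) ≤ hdst := by
    intro B hB
    have hmem : sInf ((fun A => opNorm N (A - B)) '' 𝒜) ≤
        sSup ((fun B => sInf ((fun A => opNorm N (A - B)) '' 𝒜)) '' ℬ) := by
      refine le_csSup ⟨CA + CB, ?_⟩ (mem_image_of_mem _ hB)
      rintro t ⟨B', hB', rfl⟩
      refine le_trans (csInf_le ⟨0, ?_⟩ (mem_image_of_mem _ hA₀)) (hdiff A₀ hA₀ B' hB')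
      rintro t ⟨A, hA, rfl⟩
      exact aux_opNorm_nonneg hd hN _
    exact le_trans hmem (le_max_right _ _)
  have hd1 : ∀ A ∈ 𝒜, sInf ((fun B => opNorm N (A - B)) '' ℬ) ≤ hdst := by
    intro A hA
    have hmem : sInf ((fun B => opNorm N (A - B)) '' ℬ) ≤
        sSup ((fun A => sInf ((fun B => opNorm N (A - B)) '' ℬ)) '' 𝒜) := by
      refine le_csSup ⟨CA + CB, ?_⟩ (mem_image_of_mem _ hA)
      rintro t ⟨A', hA', rfl⟩
      refine le_trans (csInf_le ⟨0, ?_⟩ (mem_image_of_mem _ hB₀)) (hdiff A' hA' B₀ hB₀)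
      rintro t ⟨B, hB, rfl⟩
      exact aux_opNorm_nonneg hd hN _
    exact le_trans hmem (le_max_left _ _)
  have hh0 : (0:ℝ) ≤ hdst := by
    refine le_trans ?_ (hd2 B₀ hB₀)
    refine le_csInf ⟨opNorm N (A₀ - B₀), mem_image_of_mem _ hA₀⟩ ?_
    rintro t ⟨A, hA, rfl⟩
    exact aux_opNorm_nonneg hd hN _
  -- Barabanov facts
  obtain ⟨CAb, hCAb0, hCAb⟩ := aux_opNorm_bdd_of_compact hd hNbn h𝒜cp
  have hAsetbdd : ∀ x : Fin d → K, BddAbove {r : ℝ | ∃ A ∈ 𝒜, r = Nb (A.mulVec x)} := by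
    intro x
    refine ⟨CAb * Nb x, ?_⟩
    rintro r ⟨A, hA, rfl⟩
    exact (aux_le_opNorm hd hNbn A x).trans
      (mul_le_mul_of_nonneg_right (hCAb A hA) (hNbn.1 x))
  have hAsetne : ∀ x : Fin d → K, {r : ℝ | ∃ A ∈ 𝒜, r = Nb (A.mulVec x)}.Nonempty :=
    fun x => ⟨Nb (A₀.mulVec x), A₀, hA₀, rfl⟩
  have hρA : ∀ A ∈ 𝒜, ∀ x, Nb (A.mulVec x) ≤ ρ * Nb x := by
    intro A hA x
    rw [hBar x]
    exact le_csSup (hAsetbdd x) ⟨A, hA, rfl⟩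
  have hNbx₀pos : 0 < Nb x₀ := aux_norm_pos hNbn hx₀ne
  have hρ0 : 0 ≤ ρ := by
    have h0 : 0 ≤ ρ * Nb x₀ := by
      rw [hBar x₀]
      exact le_trans (hNbn.1 _) (le_csSup (hAsetbdd x₀) ⟨A₀, hA₀, rfl⟩)
    nlinarith
  -- Upper bound: pointwise contraction for ℬ
  have hBub : ∀ B ∈ ℬ, ∀ x, Nb (B.mulVec x) ≤ (ρ + ε * hdst) * Nb x := by
    intro B hB x
    rcases eq_or_ne x 0 with rfl | hx
    · simp [Matrix.mulVec_zero, aux_norm_zero hNbn]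
    have hNbx : 0 < Nb x := aux_norm_pos hNbn hx
    refine le_of_forall_pos_le_add fun η hη => ?_
    set δ := η / (ε * Nb x) with hδ
    have hδpos : 0 < δ := by positivity
    obtain ⟨t, ⟨A, hA, rfl⟩, hAB⟩ := exists_lt_of_csInf_lt
      (⟨opNorm N (A₀ - B), mem_image_of_mem _ hA₀⟩ :
        ((fun A => opNorm N (A - B)) '' 𝒜).Nonempty)
      (lt_of_le_of_lt (hd2 B hB) (by linarith : hdst < hdst + δ))
    have t1 : Nb (B.mulVec x) ≤ Nb (A.mulVec x) + Nb ((B - A).mulVec x) := by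
      have heq : B.mulVec x = A.mulVec x + (B - A).mulVec x := by
        rw [Matrix.sub_mulVec]; abel
      rw [heq]; exact hNbn.2.2.2 _ _
    have t2 := hρA A hA x
    have t5 : opNorm N (B - A) = opNorm N (A - B) := by
      rw [← aux_opNorm_neg hN (A - B), neg_sub]
    have t6 : N x ≤ Nb x / em := by
      rw [le_div_iff₀ hem_pos]; linarith [hlb x]
    have t7 : Nb ((B - A).mulVec x) ≤ ep * ((hdst + δ) * (Nb x / em)) := by
      calc Nb ((B - A).mulVec x) ≤ ep * N ((B - A).mulVec x) := hub _
        _ ≤ ep * (opNorm N (B - A) * N x) :=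
            mul_le_mul_of_nonneg_left (aux_le_opNorm hd hN _ x) hep_pos.le
        _ ≤ ep * ((hdst + δ) * (Nb x / em)) := by
            refine mul_le_mul_of_nonneg_left ?_ hep_pos.le
            have hop : opNorm N (B - A) ≤ hdst + δ := t5 ▸ hAB.le
            have hopn : 0 ≤ opNorm N (B - A) := aux_opNorm_nonneg hd hN _
            have hNx0 : 0 ≤ N x := hN.1 x
            nlinarith [div_nonneg hNbx.le hem_pos.le]
    have t8 : ep * ((hdst + δ) * (Nb x / em)) = ε * hdst * Nb x + η := by
      rw [hδ, hεdef]
      field_simp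
    have t9 : (ρ + ε * hdst) * Nb x = ρ * Nb x + ε * hdst * Nb x := by ring
    linarith
  have hr_ub : (0:ℝ) ≤ ρ + ε * hdst := by positivity
  have hPub := aux_prodSet_pointwise hd hNbn hr_ub hBub
  have hopNle : ∀ n, ∀ P ∈ prodSet ℬ n, opNorm N P ≤ ε * (ρ + ε * hdst) ^ n := by
    intro n P hP
    refine aux_opNorm_le hd hN fun x => ?_
    have u1 : N (P.mulVec x) ≤ Nb (P.mulVec x) / em := by
      rw [le_div_iff₀ hem_pos]; linarith [hlb (P.mulVec x)]
    have u2 : Nb (P.mulVec x) ≤ (ρ + ε * hdst) ^ n * (ep * N x) :=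
      (hPub n P hP x).trans
        (mul_le_mul_of_nonneg_left (hub x) (pow_nonneg hr_ub n))
    calc N (P.mulVec x) ≤ Nb (P.mulVec x) / em := u1
      _ ≤ ((ρ + ε * hdst) ^ n * (ep * N x)) / em := (div_le_div_iff_of_pos_right hem_pos).2 u2
      _ = (ε * (ρ + ε * hdst) ^ n) * N x := by
          rw [hεdef]; field_simp
  have hsetub : ∀ n, setNorm N (prodSet ℬ n) ≤ ε * (ρ + ε * hdst) ^ n := fun n =>
    aux_setNorm_le (aux_prodSet_nonempty ⟨B₀, hB₀⟩ n) (hopNle n)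
  have hsetnn : ∀ n, 0 ≤ setNorm N (prodSet ℬ n) := by
    intro n
    obtain ⟨P, hP⟩ := aux_prodSet_nonempty (⟨B₀, hB₀⟩ : ℬ.Nonempty) n
    exact le_trans (aux_opNorm_nonneg hd hN P) (aux_le_setNorm (hopNle n) hP)
  have hUB : jsr N ℬ ≤ ρ + ε * hdst := aux_jsr_le hd hr_ub hεpos hsetnn hsetub
  -- global bound for setNorm of ℬ products
  have hsetCb : ∀ n, setNorm N (prodSet ℬ n) ≤ (max CB 1) ^ n := fun n =>
    aux_setNorm_le (aux_prodSet_nonempty ⟨B₀, hB₀⟩ n) (aux_prodSet_opNorm_le hd hN hCB n)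
  have hCb1 : (1:ℝ) ≤ max CB 1 := le_max_right _ _
  -- Lower bound
  have hBptw : ∀ B ∈ ℬ, ∀ x, Nb (B.mulVec x) ≤ (ε * CB) * Nb x := by
    intro B hB x
    have h6 : N x ≤ Nb x / em := by
      rw [le_div_iff₀ hem_pos]; linarith [hlb x]
    calc Nb (B.mulVec x) ≤ ep * N (B.mulVec x) := hub _
      _ ≤ ep * (opNorm N B * N x) :=
          mul_le_mul_of_nonneg_left (aux_le_opNorm hd hN B x) hep_pos.le
      _ ≤ ep * (CB * (Nb x / em)) := by
          refine mul_le_mul_of_nonneg_left ?_ hep_pos.le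
          have hop := hCB B hB
          have hopn : 0 ≤ opNorm N B := aux_opNorm_nonneg hd hN B
          have hNx0 : 0 ≤ N x := hN.1 x
          nlinarith [div_nonneg (hNbn.1 x) hem_pos.le]
      _ = (ε * CB) * Nb x := by rw [hεdef]; field_simp
  have hBsetbdd : ∀ x : Fin d → K, BddAbove {t : ℝ | ∃ B ∈ ℬ, t = Nb (B.mulVec x)} := by
    intro x
    refine ⟨(ε * CB) * Nb x, ?_⟩
    rintro t ⟨B, hB, rfl⟩
    exact hBptw B hB x
  have hBlbP : ∀ x, (ρ - ε * hdst) * Nb x ≤ sSup {t : ℝ | ∃ B ∈ ℬ, t = Nb (B.mulVec x)} := by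
    intro x
    rcases eq_or_ne x 0 with rfl | hx
    · rw [aux_norm_zero hNbn, mul_zero]
      exact le_trans (hNbn.1 _) (le_csSup (hBsetbdd 0) ⟨B₀, hB₀, rfl⟩)
    have hNbx : 0 < Nb x := aux_norm_pos hNbn hx
    refine le_of_forall_pos_le_add fun η hη => ?_
    obtain ⟨t, ⟨A, hA, rfl⟩, hAx⟩ := exists_lt_of_lt_csSup (hAsetne x)
      (show ρ * Nb x - η / 2 < sSup {r : ℝ | ∃ A ∈ 𝒜, r = Nb (A.mulVec x)} by
        rw [← hBar x]; linarith)
    set δ := η / (2 * ε * Nb x) with hδ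
    have hδpos : 0 < δ := by positivity
    obtain ⟨t, ⟨B, hB, rfl⟩, hAB⟩ := exists_lt_of_csInf_lt
      (⟨opNorm N (A - B₀), mem_image_of_mem _ hB₀⟩ :
        ((fun B => opNorm N (A - B)) '' ℬ).Nonempty)
      (lt_of_le_of_lt (hd1 A hA) (by linarith : hdst < hdst + δ))
    have t1 : Nb (A.mulVec x) ≤ Nb (B.mulVec x) + Nb ((A - B).mulVec x) := by
      have heq : A.mulVec x = B.mulVec x + (A - B).mulVec x := by
        rw [Matrix.sub_mulVec]; abel
      rw [heq]; exact hNbn.2.2.2 _ _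
    have t6 : N x ≤ Nb x / em := by
      rw [le_div_iff₀ hem_pos]; linarith [hlb x]
    have t7 : Nb ((A - B).mulVec x) ≤ ep * ((hdst + δ) * (Nb x / em)) := by
      calc Nb ((A - B).mulVec x) ≤ ep * N ((A - B).mulVec x) := hub _
        _ ≤ ep * (opNorm N (A - B) * N x) :=
            mul_le_mul_of_nonneg_left (aux_le_opNorm hd hN _ x) hep_pos.le
        _ ≤ ep * ((hdst + δ) * (Nb x / em)) := by
            refine mul_le_mul_of_nonneg_left ?_ hep_pos.le
            have hop : opNorm N (A - B) ≤ hdst + δ := hAB.le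
            have hopn : 0 ≤ opNorm N (A - B) := aux_opNorm_nonneg hd hN _
            have hNx0 : 0 ≤ N x := hN.1 x
            nlinarith [div_nonneg hNbx.le hem_pos.le]
    have t8 : ep * ((hdst + δ) * (Nb x / em)) = ε * hdst * Nb x + η / 2 := by
      rw [hδ, hεdef]
      field_simp
    have t9 : Nb (B.mulVec x) ≤ sSup {t : ℝ | ∃ B ∈ ℬ, t = Nb (B.mulVec x)} :=
      le_csSup (hBsetbdd x) ⟨B, hB, rfl⟩
    have t10 : (ρ - ε * hdst) * Nb x = ρ * Nb x - ε * hdst * Nb x := by ring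
    linarith
  set rlb := max (ρ - ε * hdst) 0 with hrlbdef
  have hrlb0 : (0:ℝ) ≤ rlb := le_max_right _ _
  have hBlb : ∀ x, rlb * Nb x ≤ sSup {t : ℝ | ∃ B ∈ ℬ, t = Nb (B.mulVec x)} := by
    intro x
    rcases max_cases (ρ - ε * hdst) (0:ℝ) with ⟨hm, _⟩ | ⟨hm, _⟩
    · rw [hrlbdef, hm]; exact hBlbP x
    · rw [hrlbdef, hm, zero_mul]
      exact le_trans (hNbn.1 _) (le_csSup (hBsetbdd x) ⟨B₀, hB₀, rfl⟩)
  have hsuplow := aux_prodSet_sup_lower hd hNbn ⟨B₀, hB₀⟩ hrlb0 hBptw hBlb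
  have hc₀ : (0:ℝ) < Nb x₀ / ep := by positivity
  have hsetlb : ∀ n, (Nb x₀ / ep) * rlb ^ n ≤ setNorm N (prodSet ℬ n) := by
    intro n
    refine le_of_forall_pos_le_add fun η hη => ?_
    have h1' : rlb ^ n * Nb x₀ ≤ sSup {t : ℝ | ∃ P ∈ prodSet ℬ n, t = Nb (P.mulVec x₀)} :=
      hsuplow n x₀
    obtain ⟨P₁, hP₁⟩ := aux_prodSet_nonempty (⟨B₀, hB₀⟩ : ℬ.Nonempty) n
    obtain ⟨t, ⟨P, hP, rfl⟩, hPx⟩ := exists_lt_of_lt_csSup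
      (⟨Nb (P₁.mulVec x₀), P₁, hP₁, rfl⟩ :
        {t : ℝ | ∃ P ∈ prodSet ℬ n, t = Nb (P.mulVec x₀)}.Nonempty)
      (show rlb ^ n * Nb x₀ - η * ep <
          sSup {t : ℝ | ∃ P ∈ prodSet ℬ n, t = Nb (P.mulVec x₀)} from
        lt_of_lt_of_le (sub_lt_self _ (by positivity)) h1')
    have h4 : Nb (P.mulVec x₀) ≤ ep * N (P.mulVec x₀) := hub _
    have h5 : N (P.mulVec x₀) ≤ opNorm N P :=
      le_csSup (aux_bddAbove_opSet hd hN P) ⟨x₀, hx₀, rfl⟩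
    have h6 : opNorm N P ≤ setNorm N (prodSet ℬ n) :=
      aux_le_setNorm (aux_prodSet_opNorm_le hd hN hCB n) hP
    have h7 : Nb (P.mulVec x₀) ≤ ep * setNorm N (prodSet ℬ n) :=
      le_trans h4 (mul_le_mul_of_nonneg_left (h5.trans h6) hep_pos.le)
    have h8 : rlb ^ n * Nb x₀ < ep * setNorm N (prodSet ℬ n) + η * ep := by linarith
    calc (Nb x₀ / ep) * rlb ^ n = (rlb ^ n * Nb x₀) / ep := by ring
      _ ≤ (ep * setNorm N (prodSet ℬ n) + η * ep) / ep := (div_le_div_iff_of_pos_right hep_pos).2 h8.le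
      _ = setNorm N (prodSet ℬ n) + η := by field_simp
  have hLB : rlb ≤ jsr N ℬ := aux_le_jsr hd hrlb0 hc₀ hCb1 hsetnn hsetCb hsetlb
  have hfin2 : ρ - ε * hdst ≤ jsr N ℬ := le_trans (le_max_left _ _) hLB
  rw [hecc]
  rw [abs_sub_le_iff]
  constructor <;> linarith

end JSRPaper
end

section
/- Let K be ℝ or ℂ, d ≥ 1, and fix a norm ‖·‖ on K^d. Let 𝒜 be an irreducible compact set of d×d matrices over K, let ‖·‖_𝒜 be any Barabanov norm for 𝒜, let C = ecc(‖·‖_𝒜, ‖·‖), and let ℬ be any nonempty bounded set of d×d matrices over K. Then ρ(ℬ) ≤ ρ(𝒜) + C·H(𝒜,ℬ). -/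
open Filter Set

namespace JSRPaper

section Helpers

variable {d : ℕ} {K : Type*} [RCLike K]

variable {N : (Fin d → K) → ℝ} (hN : IsNorm N)

section Basic
include hN

lemma N_zero : N 0 = 0 := (hN.2.1 0).mpr rfl

lemma N_neg (x : Fin d → K) : N (-x) = N x := by
  have h := hN.2.2.1 (-1) x
  simpa using h

lemma N_pos {x : Fin d → K} (hx : x ≠ 0) : 0 < N x :=
  lt_of_le_of_ne (hN.1 x) (fun h => hx ((hN.2.1 x).mp h.symm))

lemma N_sub_le (x y : Fin d → K) : N x ≤ N y + N (x - y) := by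
  have := hN.2.2.2 y (x - y); simpa using this

lemma N_bound : ∃ C : ℝ, 0 ≤ C ∧ ∀ x, N x ≤ C * ‖x‖ := by
  refine ⟨∑ i : Fin d, N (Pi.single i 1), Finset.sum_nonneg fun i _ => hN.1 _, fun x => ?_⟩
  have hx : x = ∑ i : Fin d, (x i) • (Pi.single i (1:K) : Fin d → K) := by
    rw [show (fun i => (x i) • (Pi.single i (1:K) : Fin d → K)) =
        fun i => (Pi.single i (x i) : Fin d → K) by
      funext i; ext j; by_cases h : j = i <;> simp [Pi.single_apply, h]]
    exact (Finset.univ_sum_single x).symm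
  calc N x = N (∑ i : Fin d, (x i) • (Pi.single i (1:K) : Fin d → K)) := by rw [← hx]
    _ ≤ ∑ i : Fin d, N ((x i) • (Pi.single i (1:K) : Fin d → K)) := by
        classical
        refine Finset.le_sum_of_subadditive N (N_zero hN).le hN.2.2.2 _ _
    _ = ∑ i : Fin d, ‖x i‖ * N (Pi.single i (1:K) : Fin d → K) := by
        simp [hN.2.2.1]
    _ ≤ ∑ i : Fin d, ‖x‖ * N (Pi.single i (1:K) : Fin d → K) := by
        refine Finset.sum_le_sum fun i _ => ?_
        exact mul_le_mul_of_nonneg_right (norm_le_pi_norm x i) (hN.1 _)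
    _ = (∑ i : Fin d, N (Pi.single i 1)) * ‖x‖ := by
        rw [Finset.sum_mul]; exact Finset.sum_congr rfl fun i _ => mul_comm _ _

lemma N_continuous : Continuous N := by
  obtain ⟨C, hC0, hC⟩ := N_bound hN
  refine (LipschitzWith.of_dist_le_mul (K := C.toNNReal) (f := N) fun x y => ?_).continuous
  have h1 : N x - N y ≤ N (x - y) := by
    have := N_sub_le hN x y; linarith
  have h2 : N y - N x ≤ N (x - y) := by
    have := N_sub_le hN y x
    have hxy : N (y - x) = N (x - y) := by
      rw [show y - x = -(x - y) by ring, N_neg hN]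
    linarith
  have : dist (N x) (N y) ≤ N (x - y) := by
    rw [Real.dist_eq, abs_sub_le_iff]; exact ⟨h1, h2⟩
  refine this.trans ?_
  calc N (x - y) ≤ C * ‖x - y‖ := hC _
    _ = C.toNNReal * dist x y := by rw [dist_eq_norm, Real.coe_toNNReal C hC0]

end Basic

section Sphere
include hN

lemma N_smul_real (r : ℝ) (x : Fin d → K) : N (((r : K)) • x) = |r| * N x := by
  rw [hN.2.2.1]; simp

lemma N_normalize {x : Fin d → K} (hx : x ≠ 0) :
    N ((((N x)⁻¹ : ℝ) : K) • x) = 1 := by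
  rw [N_smul_real hN, abs_of_nonneg (inv_nonneg.mpr (hN.1 x))]
  exact inv_mul_cancel₀ (N_pos hN hx).ne'

lemma N_lower (hd : 1 ≤ d) : ∃ c : ℝ, 0 < c ∧ ∀ x, c * ‖x‖ ≤ N x := by
  haveI : Nontrivial (Fin d → K) := by
    refine ⟨Pi.single ⟨0, hd⟩ 1, 0, fun h => ?_⟩
    have := congrFun h ⟨0, hd⟩
    simp at this
  obtain ⟨x₀, hx₀⟩ := exists_norm_eq (Fin d → K) (zero_le_one)
  have hS : IsCompact (Metric.sphere (0 : Fin d → K) 1) := isCompact_sphere _ _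
  have hSne : (Metric.sphere (0 : Fin d → K) 1).Nonempty := ⟨x₀, by simpa [mem_sphere_iff_norm] using hx₀⟩
  obtain ⟨z, hzS, hz⟩ := hS.exists_isMinOn hSne (N_continuous hN).continuousOn
  have hz0 : z ≠ 0 := by
    intro h
    rw [mem_sphere_iff_norm, h] at hzS; simp at hzS
  refine ⟨N z, N_pos hN hz0, fun x => ?_⟩
  rcases eq_or_ne x 0 with rfl | hx
  · simp [N_zero hN]
  · have hnx : (0:ℝ) < ‖x‖ := norm_pos_iff.mpr hx
    set u : Fin d → K := (((‖x‖⁻¹ : ℝ) : K)) • x with hu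
    have huS : u ∈ Metric.sphere (0 : Fin d → K) 1 := by
      rw [mem_sphere_iff_norm, sub_zero, hu, norm_smul]
      simp [abs_of_nonneg (inv_nonneg.mpr hnx.le), inv_mul_cancel₀ hnx.ne']
    have hNu : N u = ‖x‖⁻¹ * N x := by
      rw [hu, N_smul_real hN, abs_of_nonneg (inv_nonneg.mpr hnx.le)]
    have h2 : N z ≤ ‖x‖⁻¹ * N x := by rw [← hNu]; exact hz huS
    calc N z * ‖x‖ ≤ (‖x‖⁻¹ * N x) * ‖x‖ := mul_le_mul_of_nonneg_right h2 hnx.le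
      _ = N x := by field_simp

lemma isClosed_sphN : IsClosed {x : Fin d → K | N x = 1} := by
  have : {x : Fin d → K | N x = 1} = N ⁻¹' {1} := rfl
  rw [this]; exact isClosed_singleton.preimage (N_continuous hN)

lemma isCompact_sphN (hd : 1 ≤ d) : IsCompact {x : Fin d → K | N x = 1} := by
  obtain ⟨c, hc, hcl⟩ := N_lower hN hd
  refine Metric.isCompact_of_isClosed_isBounded (isClosed_sphN hN) ?_
  refine (Metric.isBounded_iff_subset_closedBall 0).mpr ⟨c⁻¹, fun x hx => ?_⟩
  rw [Metric.mem_closedBall, dist_zero_right]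
  have h1 : c * ‖x‖ ≤ 1 := by rw [← hx]; exact hcl x
  calc ‖x‖ = c⁻¹ * (c * ‖x‖) := by field_simp
    _ ≤ c⁻¹ * 1 := mul_le_mul_of_nonneg_left h1 (inv_nonneg.mpr hc.le)
    _ = c⁻¹ := mul_one _

lemma sphN_nonempty (hd : 1 ≤ d) : {x : Fin d → K | N x = 1}.Nonempty := by
  have h0 : (Pi.single (⟨0, hd⟩ : Fin d) 1 : Fin d → K) ≠ 0 := by
    intro h
    have := congrFun h ⟨0, hd⟩
    simp at this
  exact ⟨_, N_normalize hN h0⟩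

omit hN in
lemma opNorm_set_eq (A : Matrix (Fin d) (Fin d) K) :
    {r : ℝ | ∃ x : Fin d → K, N x = 1 ∧ r = N (A.mulVec x)} =
      (fun x => N (A.mulVec x)) '' {x : Fin d → K | N x = 1} := by
  ext r; constructor
  · rintro ⟨x, hx, rfl⟩; exact ⟨x, hx, rfl⟩
  · rintro ⟨x, hx, rfl⟩; exact ⟨x, hx, rfl⟩

lemma opNorm_isCompact (hd : 1 ≤ d) (A : Matrix (Fin d) (Fin d) K) :
    IsCompact {r : ℝ | ∃ x : Fin d → K, N x = 1 ∧ r = N (A.mulVec x)} := by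
  rw [opNorm_set_eq]
  exact (isCompact_sphN hN hd).image
    ((N_continuous hN).comp (Continuous.matrix_mulVec continuous_const continuous_id))

lemma opNorm_set_nonempty (hd : 1 ≤ d) (A : Matrix (Fin d) (Fin d) K) :
    {r : ℝ | ∃ x : Fin d → K, N x = 1 ∧ r = N (A.mulVec x)}.Nonempty := by
  obtain ⟨x, hx⟩ := sphN_nonempty hN hd
  exact ⟨_, x, hx, rfl⟩

lemma opNorm_nonneg (hd : 1 ≤ d) (A : Matrix (Fin d) (Fin d) K) : 0 ≤ opNorm N A := by
  obtain ⟨r, x, hx, rfl⟩ := opNorm_set_nonempty hN hd A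
  exact (hN.1 _).trans (le_csSup ((opNorm_isCompact hN hd A).bddAbove) ⟨x, hx, rfl⟩)

lemma opNorm_le_iff (hd : 1 ≤ d) {A : Matrix (Fin d) (Fin d) K} {c : ℝ} :
    opNorm N A ≤ c ↔ ∀ x : Fin d → K, N x = 1 → N (A.mulVec x) ≤ c := by
  constructor
  · intro h x hx
    exact (le_csSup ((opNorm_isCompact hN hd A).bddAbove) ⟨x, hx, rfl⟩).trans h
  · intro h
    exact csSup_le (opNorm_set_nonempty hN hd A) (by rintro r ⟨x, hx, rfl⟩; exact h x hx)

lemma N_mulVec_le (hd : 1 ≤ d) (A : Matrix (Fin d) (Fin d) K) (x : Fin d → K) :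
    N (A.mulVec x) ≤ opNorm N A * N x := by
  rcases eq_or_ne x 0 with rfl | hx
  · rw [Matrix.mulVec_zero, N_zero hN, mul_zero]
  · set u : Fin d → K := (((N x)⁻¹ : ℝ) : K) • x with hu
    have hux : A.mulVec u = (((N x)⁻¹ : ℝ) : K) • A.mulVec x := by
      rw [hu, Matrix.mulVec_smul]
    have h1 : N (A.mulVec u) ≤ opNorm N A :=
      (opNorm_le_iff hN hd).mp le_rfl u (N_normalize hN hx)
    rw [hux, N_smul_real hN, abs_of_nonneg (inv_nonneg.mpr (hN.1 x))] at h1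
    have hNx : (0:ℝ) < N x := N_pos hN hx
    calc N (A.mulVec x) = (N x) * ((N x)⁻¹ * N (A.mulVec x)) := by field_simp
      _ ≤ (N x) * opNorm N A := mul_le_mul_of_nonneg_left h1 hNx.le
      _ = opNorm N A * N x := mul_comm _ _

end Sphere

section Algebra
include hN
variable (hd : 1 ≤ d)
include hd

lemma opNorm_mul_le (A B : Matrix (Fin d) (Fin d) K) :
    opNorm N (A * B) ≤ opNorm N A * opNorm N B := by
  refine (opNorm_le_iff hN hd).mpr fun x hx => ?_
  rw [← Matrix.mulVec_mulVec]
  calc N (A.mulVec (B.mulVec x)) ≤ opNorm N A * N (B.mulVec x) := N_mulVec_le hN hd A _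
    _ ≤ opNorm N A * (opNorm N B * N x) :=
        mul_le_mul_of_nonneg_left (N_mulVec_le hN hd B x) (opNorm_nonneg hN hd A)
    _ = opNorm N A * opNorm N B := by rw [hx, mul_one]

lemma opNorm_one : opNorm N (1 : Matrix (Fin d) (Fin d) K) = 1 := by
  refine le_antisymm ((opNorm_le_iff hN hd).mpr fun x hx => by rw [Matrix.one_mulVec, hx]) ?_
  obtain ⟨x, hx⟩ := sphN_nonempty hN hd
  have : (1:ℝ) ∈ {r : ℝ | ∃ x : Fin d → K, N x = 1 ∧ r = N ((1 : Matrix (Fin d) (Fin d) K).mulVec x)} :=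
    ⟨x, hx, by rw [Matrix.one_mulVec, hx]⟩
  exact le_csSup ((opNorm_isCompact hN hd 1).bddAbove) this

lemma opNorm_add_le (A B : Matrix (Fin d) (Fin d) K) :
    opNorm N (A + B) ≤ opNorm N A + opNorm N B := by
  refine (opNorm_le_iff hN hd).mpr fun x hx => ?_
  rw [Matrix.add_mulVec]
  calc N (A.mulVec x + B.mulVec x) ≤ N (A.mulVec x) + N (B.mulVec x) := hN.2.2.2 _ _
    _ ≤ opNorm N A * N x + opNorm N B * N x :=
        add_le_add (N_mulVec_le hN hd A x) (N_mulVec_le hN hd B x)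
    _ = opNorm N A + opNorm N B := by rw [hx, mul_one, mul_one]

omit hd in
lemma opNorm_neg (A : Matrix (Fin d) (Fin d) K) : opNorm N (-A) = opNorm N A := by
  unfold opNorm
  congr 1
  ext r
  constructor
  · rintro ⟨x, hx, rfl⟩
    exact ⟨x, hx, by rw [Matrix.neg_mulVec, N_neg hN]⟩
  · rintro ⟨x, hx, rfl⟩
    exact ⟨x, hx, by rw [Matrix.neg_mulVec, N_neg hN]⟩

omit hd in
lemma opNorm_sub_comm (A B : Matrix (Fin d) (Fin d) K) :
    opNorm N (A - B) = opNorm N (B - A) := by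
  rw [← opNorm_neg hN (B - A), neg_sub]

end Algebra



end Helpers



/-- upper estimate `ρ(ℬ) ≤ ρ(𝒜) + C · H(𝒜, ℬ)` with
`C = ecc(‖·‖_𝒜, ‖·‖)`. -/
theorem jsr_upper_ecc {d : ℕ} (hd : 1 ≤ d) {K : Type*} [RCLike K]
    (N : (Fin d → K) → ℝ) (hN : IsNorm N)
    (𝒜 : Set (Matrix (Fin d) (Fin d) K))
    (h𝒜ne : 𝒜.Nonempty) (h𝒜cp : IsCompact 𝒜) (h𝒜ir : IsIrred 𝒜)
    (Nb : (Fin d → K) → ℝ) (hNb : IsBarabanov N Nb 𝒜)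
    (ℬ : Set (Matrix (Fin d) (Fin d) K)) (hℬne : ℬ.Nonempty) (hℬbd : IsBdd N ℬ) :
    jsr N ℬ ≤ jsr N 𝒜 + eccen Nb N * hdist N 𝒜 ℬ := by
  obtain ⟨hNbn, hbar⟩ := hNb
  obtain ⟨A₀, hA₀⟩ := h𝒜ne
  obtain ⟨B₀, hB₀⟩ := hℬne
  obtain ⟨Cb, hCb⟩ := hℬbd
  set ρ := jsr N 𝒜 with hρdef
  set H := hdist N 𝒜 ℬ with hHdef
  set S : Set ℝ := {r : ℝ | ∃ x : Fin d → K, x ≠ 0 ∧ r = Nb x / N x} with hSdef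
  have hSeq : S = Nb '' {x : Fin d → K | N x = 1} := by
    ext r; constructor
    · rintro ⟨x, hx0, rfl⟩
      refine ⟨(((N x)⁻¹ : ℝ) : K) • x, N_normalize hN hx0, ?_⟩
      rw [N_smul_real hNbn, abs_of_nonneg (inv_nonneg.mpr (hN.1 x)), inv_mul_eq_div]
    · rintro ⟨x, hx, rfl⟩
      have hx' : N x = 1 := hx
      have hx0 : x ≠ 0 := by
        intro h; rw [h, N_zero hN] at hx'; norm_num at hx'
      exact ⟨x, hx0, by rw [hx', div_one]⟩
  have hScpt : IsCompact S := hSeq ▸ (isCompact_sphN hN hd).image (N_continuous hNbn)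
  have hSne : S.Nonempty := by
    rw [hSeq]; exact (sphN_nonempty hN hd).image Nb
  set M := sSup S with hMdef
  set m := sInf S with hmdef
  have hMmem : M ∈ S := hScpt.sSup_mem hSne
  have hmmem : m ∈ S := hScpt.sInf_mem hSne
  have hmpos : 0 < m := by
    obtain ⟨x, hx0, hx⟩ := hmmem
    rw [hx]; exact div_pos (N_pos hNbn hx0) (N_pos hN hx0)
  have hMpos : 0 < M :=
    hmpos.trans_le (csInf_le_csSup hSne hScpt.bddBelow hScpt.bddAbove)
  have hub : ∀ y, Nb y ≤ M * N y := by
    intro y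
    rcases eq_or_ne y 0 with rfl | hy
    · rw [N_zero hN, N_zero hNbn, mul_zero]
    · have h1 : Nb y / N y ≤ M := le_csSup hScpt.bddAbove ⟨y, hy, rfl⟩
      have hNy : (0:ℝ) < N y := N_pos hN hy
      calc Nb y = (Nb y / N y) * N y := by field_simp
        _ ≤ M * N y := mul_le_mul_of_nonneg_right h1 hNy.le
  have hlb : ∀ y, m * N y ≤ Nb y := by
    intro y
    rcases eq_or_ne y 0 with rfl | hy
    · rw [N_zero hN, N_zero hNbn, mul_zero]
    · have h1 : m ≤ Nb y / N y := csInf_le hScpt.bddBelow ⟨y, hy, rfl⟩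
      have hNy : (0:ℝ) < N y := N_pos hN hy
      calc m * N y ≤ (Nb y / N y) * N y := mul_le_mul_of_nonneg_right h1 hNy.le
        _ = Nb y := by field_simp
  set C := M / m with hCdef
  have hC0 : 0 < C := div_pos hMpos hmpos
  have hecc : eccen Nb N = C := by rw [hCdef, hMdef, hmdef, hSdef]; rfl
  -- Barabanov facts
  have hbddbar : ∀ x : Fin d → K, BddAbove {r : ℝ | ∃ A ∈ 𝒜, r = Nb (A.mulVec x)} := by
    intro x
    have heq : {r : ℝ | ∃ A ∈ 𝒜, r = Nb (A.mulVec x)} =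
        (fun A : Matrix (Fin d) (Fin d) K => Nb (A.mulVec x)) '' 𝒜 := by
      ext r; constructor
      · rintro ⟨A, hA, rfl⟩; exact ⟨A, hA, rfl⟩
      · rintro ⟨A, hA, rfl⟩; exact ⟨A, hA, rfl⟩
    rw [heq]
    exact (h𝒜cp.image ((N_continuous hNbn).comp
      (Continuous.matrix_mulVec continuous_id continuous_const))).bddAbove
  have hbarle : ∀ x : Fin d → K, ∀ A ∈ 𝒜, Nb (A.mulVec x) ≤ ρ * Nb x := by
    intro x A hA
    rw [hρdef, hbar x]
    exact le_csSup (hbddbar x) ⟨A, hA, rfl⟩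
  have hρ0 : 0 ≤ ρ := by
    obtain ⟨x₀, hx₀⟩ := sphN_nonempty hNbn hd
    have h1 : 0 ≤ Nb (A₀.mulVec x₀) := hNbn.1 _
    have h2 := hbarle x₀ A₀ hA₀
    rw [hx₀, mul_one] at h2
    linarith
  -- Hausdorff distance facts
  have hObd : ∀ B ∈ ℬ, ∀ A ∈ 𝒜, opNorm N (A - B) ≤ opNorm N A + Cb := by
    intro B hB A hA
    have h1 : opNorm N (A - B) ≤ opNorm N A + opNorm N (-B) := by
      rw [sub_eq_add_neg]
      exact opNorm_add_le hN hd A (-B)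
    rw [opNorm_neg hN] at h1
    exact h1.trans (add_le_add le_rfl (hCb B hB))
  have hinfle : ∀ B ∈ ℬ, sInf ((fun A => opNorm N (A - B)) '' 𝒜) ≤ H := by
    intro B hB
    have hbdd : BddAbove ((fun B => sInf ((fun A => opNorm N (A - B)) '' 𝒜)) '' ℬ) := by
      refine ⟨opNorm N A₀ + Cb, ?_⟩
      rintro r ⟨B', hB', rfl⟩
      have hbl : BddBelow ((fun A => opNorm N (A - B')) '' 𝒜) := by
        refine ⟨0, ?_⟩
        rintro r ⟨A, hA, rfl⟩
        exact opNorm_nonneg hN hd _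
      exact (csInf_le hbl ⟨A₀, hA₀, rfl⟩).trans (hObd B' hB' A₀ hA₀)
    exact (le_csSup hbdd ⟨B, hB, rfl⟩).trans (le_max_right _ _)
  have hH0 : 0 ≤ H := by
    refine le_trans ?_ (hinfle B₀ hB₀)
    refine Real.sInf_nonneg ?_
    rintro r ⟨A, hA, rfl⟩
    exact opNorm_nonneg hN hd _
  set ρ' := ρ + C * H with hρ'def
  have hρ'0 : 0 ≤ ρ' := add_nonneg hρ0 (mul_nonneg hC0.le hH0)
  -- key bound : opNorm Nb B ≤ ρ' for B ∈ ℬ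
  have hkey : ∀ B ∈ ℬ, opNorm Nb B ≤ ρ' := by
    intro B hB
    refine le_of_forall_pos_le_add fun δ hδ => ?_
    have hε : 0 < δ / C := div_pos hδ hC0
    have hlt : sInf ((fun A => opNorm N (A - B)) '' 𝒜) < H + δ / C :=
      lt_of_le_of_lt (hinfle B hB) (by linarith)
    obtain ⟨r, ⟨A, hA, rfl⟩, hrlt⟩ :=
      exists_lt_of_csInf_lt (⟨_, ⟨A₀, hA₀, rfl⟩⟩ :
        ((fun A => opNorm N (A - B)) '' 𝒜).Nonempty) hlt
    refine (opNorm_le_iff hNbn hd).mpr fun x hx => ?_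
    have t1 : N ((B - A).mulVec x) ≤ (H + δ / C) * m⁻¹ := by
      have u1 : N ((B - A).mulVec x) ≤ opNorm N (B - A) * N x := N_mulVec_le hN hd _ x
      have u2 : opNorm N (B - A) ≤ H + δ / C := by
        rw [opNorm_sub_comm hN]; exact hrlt.le
      have u3 : N x ≤ m⁻¹ := by
        have h := hlb x
        rw [hx] at h
        calc N x = m⁻¹ * (m * N x) := by field_simp
          _ ≤ m⁻¹ * 1 := mul_le_mul_of_nonneg_left h (inv_nonneg.mpr hmpos.le)
          _ = m⁻¹ := mul_one _
      exact u1.trans (mul_le_mul u2 u3 (hN.1 x) (add_nonneg hH0 hε.le))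
    have t2 : Nb (B.mulVec x) ≤ ρ * Nb x + M * ((H + δ / C) * m⁻¹) := by
      calc Nb (B.mulVec x) = Nb (A.mulVec x + (B - A).mulVec x) := by
            rw [← Matrix.add_mulVec, add_sub_cancel]
        _ ≤ Nb (A.mulVec x) + Nb ((B - A).mulVec x) := hNbn.2.2.2 _ _
        _ ≤ ρ * Nb x + M * N ((B - A).mulVec x) := add_le_add (hbarle x A hA) (hub _)
        _ ≤ ρ * Nb x + M * ((H + δ / C) * m⁻¹) :=
            add_le_add le_rfl (mul_le_mul_of_nonneg_left t1 hMpos.le)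
    rw [hx, mul_one] at t2
    have t3 : M * ((H + δ / C) * m⁻¹) = C * H + δ := by
      rw [hCdef]
      field_simp
    rw [t3] at t2
    rw [hρ'def]
    linarith
  -- product set bounds
  have hprodne : ∀ n : ℕ, (prodSet ℬ n).Nonempty := by
    intro n
    induction n with
    | zero => exact ⟨1, rfl⟩
    | succ n ih =>
      obtain ⟨P, hP⟩ := ih
      exact ⟨B₀ * P, B₀, hB₀, P, hP, rfl⟩
  have hprodbd : ∀ n : ℕ, ∀ P ∈ prodSet ℬ n, opNorm Nb P ≤ ρ' ^ n := by
    intro n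
    induction n with
    | zero =>
      intro P hP
      have hP1 : P = 1 := hP
      rw [hP1, opNorm_one hNbn hd, pow_zero]
    | succ n ih =>
      rintro P ⟨B, hB, Q, hQ, rfl⟩
      calc opNorm Nb (B * Q) ≤ opNorm Nb B * opNorm Nb Q := opNorm_mul_le hNbn hd B Q
        _ ≤ ρ' * ρ' ^ n :=
            mul_le_mul (hkey B hB) (ih Q hQ) (opNorm_nonneg hNbn hd Q) hρ'0
        _ = ρ' ^ (n + 1) := by ring
  have hcomp : ∀ P : Matrix (Fin d) (Fin d) K, opNorm N P ≤ C * opNorm Nb P := by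
    intro P
    refine (opNorm_le_iff hN hd).mpr fun x hx => ?_
    have w1 : N (P.mulVec x) ≤ m⁻¹ * Nb (P.mulVec x) := by
      have h := hlb (P.mulVec x)
      calc N (P.mulVec x) = m⁻¹ * (m * N (P.mulVec x)) := by field_simp
        _ ≤ m⁻¹ * Nb (P.mulVec x) := mul_le_mul_of_nonneg_left h (inv_nonneg.mpr hmpos.le)
    have w2 : Nb (P.mulVec x) ≤ opNorm Nb P * Nb x := N_mulVec_le hNbn hd P x
    have w3 : Nb x ≤ M := by
      have := hub x
      rw [hx, mul_one] at this
      exact this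
    have w4 : Nb (P.mulVec x) ≤ opNorm Nb P * M :=
      w2.trans (mul_le_mul_of_nonneg_left w3 (opNorm_nonneg hNbn hd P))
    calc N (P.mulVec x) ≤ m⁻¹ * (opNorm Nb P * M) :=
          w1.trans (mul_le_mul_of_nonneg_left w4 (inv_nonneg.mpr hmpos.le))
      _ = C * opNorm Nb P := by rw [hCdef]; field_simp
  have hsetbd : ∀ n : ℕ, setNorm N (prodSet ℬ n) ≤ C * ρ' ^ n := by
    intro n
    refine Real.sSup_le ?_ (mul_nonneg hC0.le (pow_nonneg hρ'0 n))
    rintro r ⟨P, hP, rfl⟩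
    exact (hcomp P).trans (mul_le_mul_of_nonneg_left (hprodbd n P hP) hC0.le)
  have hset0 : ∀ n : ℕ, 0 ≤ setNorm N (prodSet ℬ n) := by
    intro n
    obtain ⟨P, hP⟩ := hprodne n
    have hbdd : BddAbove (opNorm N '' prodSet ℬ n) := by
      refine ⟨C * ρ' ^ n, ?_⟩
      rintro r ⟨Q, hQ, rfl⟩
      exact (hcomp Q).trans (mul_le_mul_of_nonneg_left (hprodbd n Q hQ) hC0.le)
    exact (opNorm_nonneg hN hd P).trans (le_csSup hbdd ⟨P, hP, rfl⟩)
  -- limsup argument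
  have hfg : ∀ᶠ n : ℕ in atTop,
      setNorm N (prodSet ℬ n) ^ ((n : ℝ)⁻¹) ≤ C ^ ((n : ℝ)⁻¹) * ρ' := by
    filter_upwards [eventually_ge_atTop 1] with n hn
    have hn0 : ((n : ℝ)) ≠ 0 := Nat.cast_ne_zero.mpr (by omega)
    calc setNorm N (prodSet ℬ n) ^ ((n : ℝ)⁻¹) ≤ (C * ρ' ^ n) ^ ((n : ℝ)⁻¹) :=
          Real.rpow_le_rpow (hset0 n) (hsetbd n) (inv_nonneg.mpr (Nat.cast_nonneg n))
      _ = C ^ ((n : ℝ)⁻¹) * (ρ' ^ n) ^ ((n : ℝ)⁻¹) :=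
          Real.mul_rpow hC0.le (pow_nonneg hρ'0 n)
      _ = C ^ ((n : ℝ)⁻¹) * ρ' := by
          rw [← Real.rpow_natCast ρ' n, ← Real.rpow_mul hρ'0, mul_inv_cancel₀ hn0,
            Real.rpow_one]
  have hgt : Tendsto (fun n : ℕ => C ^ ((n : ℝ)⁻¹) * ρ') atTop (nhds ρ') := by
    have h1 : Tendsto (fun n : ℕ => ((n : ℝ))⁻¹) atTop (nhds 0) :=
      tendsto_inv_atTop_zero.comp tendsto_natCast_atTop_atTop
    have h2 : Tendsto (fun n : ℕ => C ^ ((n : ℝ)⁻¹)) atTop (nhds 1) := by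
      have h3 := Filter.Tendsto.rpow (tendsto_const_nhds (x := C) (f := atTop (α := ℕ)))
        h1 (Or.inl hC0.ne')
      simpa using h3
    have h4 := h2.mul_const ρ'
    simpa using h4
  have hcob : Filter.IsBoundedUnder (· ≥ ·) atTop
      (fun n : ℕ => setNorm N (prodSet ℬ n) ^ ((n : ℝ)⁻¹)) :=
    Filter.isBoundedUnder_of ⟨0, fun n => Real.rpow_nonneg (hset0 n) _⟩
  have hfinal : jsr N ℬ ≤ ρ' := by
    have hls := Filter.limsup_le_limsup hfg hcob.isCoboundedUnder_le hgt.isBoundedUnder_le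
    rw [hgt.limsup_eq] at hls
    exact hls
  calc jsr N ℬ ≤ ρ' := hfinal
    _ = ρ + eccen Nb N * H := by rw [hρ'def, hecc]

end JSRPaper
end
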